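/- Let f(x) = 1 + (1-ε)·a/(x+εa) - N_F·e^{-cx} with a, c > 0, N_F > 1 and 1/N_F < ε < 1. Then every root x* > 0 of f satisfies x* ≥ ln(εN_F)/c. -/

import Mathlib

open Real

theorem root_lower_bound
    (a c NF ε : ℝ) (ha : 0 < a) (hc : 0 < c) (hNF : 1 < NF)
    (hε1 : 1 / NF < ε) (hε2 : ε < 1)
    (f : ℝ → ℝ)
    (hf : ∀ x, f x = 1 + (1 - ε) * a / (x + ε * a) - NF * Real.exp (-c * x))
    (x : ℝ) (hx : 0 < x) (hroot : f x = 0) :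
    Real.log (ε * NF) / c ≤ x := by
  have hNF0 : 0 < NF := lt_trans one_pos hNF
  have hε0 : 0 < ε := lt_trans (by positivity) hε1
  have hden : 0 < x + ε * a := by positivity
  have heq : NF * Real.exp (-c * x) = 1 + (1 - ε) * a / (x + ε * a) := by
    have := hf x; rw [this] at hroot; linarith
  -- (1-ε)a/(x+εa) < (1-ε)/ε
  have hlt : (1 - ε) * a / (x + ε * a) < (1 - ε) / ε := by
    rw [div_lt_div_iff₀ hden hε0]
    have h1 : 0 < 1 - ε := by linarith
    nlinarith
  have h2 : NF * Real.exp (-c * x) < 1 / ε := by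
    rw [heq]
    have : 1 + (1 - ε) / ε = 1 / ε := by field_simp; ring
    linarith
  have h3 : ε * NF * Real.exp (-c * x) < 1 := by
    have := (mul_lt_mul_iff_right₀ hε0).2 h2
    rw [mul_one_div, div_self hε0.ne'] at this
    linarith [this]
  have hεNF : 0 < ε * NF := by positivity
  have h4 : Real.log (ε * NF) + (-c * x) < 0 := by
    calc Real.log (ε * NF) + (-c * x)
        = Real.log (ε * NF * Real.exp (-c * x)) := by
          rw [Real.log_mul hεNF.ne' (Real.exp_pos _).ne', Real.log_exp]
      _ < 0 := by
          have := Real.log_lt_log (by positivity) h3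
          simpa using this
  rw [div_le_iff₀ hc]
  nlinarith
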